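/- Let m ≥ 2 be even and n ≥ 2 be even. Set α = n/(n−1) and β = (1−n)/n, and let u₁ = (1, α, α², …, α^{n−1}) ∈ ℝ^n and u₂ = (1, β, β², …, β^{n−1}) ∈ ℝ^n. Let H_V be the m-th order n-dimensional tensor with entries (H_V)_{i_1,…,i_m} = (u₁)_{i_1}⋯(u₁)_{i_m} + (u₂)_{i_1}⋯(u₂)_{i_m}, so that H_V x^m = (u₁^T x)^m + (u₂^T x)^m and H_V x^{m−1} = (u₁^T x)^{m−1} u₁ + (u₂^T x)^{m−1} u₂. Then: (i) u₁^T u₂ = 0; (ii) for every x ∈ ℝ^n with ‖x‖ = 1, H_V x^m ≤ ‖u₁‖^m, with equality at x = u₁/‖u₁‖; (iii) H_V (u₁/‖u₁‖)^{m−1} = ‖u₁‖^m · (u₁/‖u₁‖), so (‖u₁‖^m, u₁/‖u₁‖) is a Z-eigenpair of H_V; and consequently (iv) every Z-eigenvalue λ of H_V satisfies λ ≤ ‖u₁‖^m, i.e. ‖u₁‖^m is the largest Z-eigenvalue of H_V. -/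

import Mathlib

/-- `A x^m` for an `m`-th order `n`-dimensional tensor `A`. -/
noncomputable def tpow {m n : ℕ} (A : (Fin m → Fin n) → ℝ) (x : EuclideanSpace ℝ (Fin n)) : ℝ :=
  ∑ g : Fin m → Fin n, A g * ∏ j, x (g j)

/-- `A x^{m-1}`, the vector with `i`-th entry `Σ_{i₂,…,i_m} a_{i,i₂,…,i_m} x_{i₂}⋯x_{i_m}`. -/
noncomputable def tvec {m n : ℕ} (hm : 0 < m) (A : (Fin m → Fin n) → ℝ)
    (x : EuclideanSpace ℝ (Fin n)) : EuclideanSpace ℝ (Fin n) :=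
  WithLp.toLp 2 fun i => ∑ g : Fin m → Fin n,
    if g ⟨0, hm⟩ = i then A g * ∏ j ∈ Finset.univ.erase ⟨0, hm⟩, x (g j) else 0

lemma prod_sum_aux {m n : ℕ} (f y : Fin n → ℝ) :
    ∑ g : Fin m → Fin n, ∏ j, (f (g j) * y (g j)) = (∑ k, f k * y k) ^ m := by
  have h := Finset.prod_univ_sum (fun _ : Fin m => (Finset.univ : Finset (Fin n)))
    (fun _ k => f k * y k)
  rw [Fintype.piFinset_univ] at h
  rw [← h, Finset.prod_const, Finset.card_univ, Fintype.card_fin]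

lemma ite_sum_aux {m n : ℕ} (j0 : Fin m) (i : Fin n) (f y : Fin n → ℝ) :
    ∑ g : Fin m → Fin n,
      (if g j0 = i then (∏ j, f (g j)) * ∏ j ∈ Finset.univ.erase j0, y (g j) else 0)
      = f i * (∑ k, f k * y k) ^ (m - 1) := by
  classical
  set F : Fin m → Fin n → ℝ := fun j k =>
    if j = j0 then (if k = i then f i else 0) else f k * y k with hF
  have step1 : ∀ g : Fin m → Fin n,
      (if g j0 = i then (∏ j, f (g j)) * ∏ j ∈ Finset.univ.erase j0, y (g j) else 0)
      = ∏ j, F j (g j) := by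
    intro g
    rw [← Finset.mul_prod_erase Finset.univ (fun j => F j (g j)) (Finset.mem_univ j0)]
    have herase : ∏ j ∈ Finset.univ.erase j0, F j (g j)
        = ∏ j ∈ Finset.univ.erase j0, (f (g j) * y (g j)) := by
      apply Finset.prod_congr rfl
      intro j hj
      simp [hF, Finset.mem_erase.mp hj |>.1]
    rw [herase]
    by_cases hgi : g j0 = i
    · simp only [hF, if_pos rfl, if_pos hgi]
      rw [← Finset.mul_prod_erase Finset.univ (fun j => f (g j)) (Finset.mem_univ j0), hgi]
      rw [Finset.prod_mul_distrib]
      ring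
    · simp [hF, hgi]
  rw [Finset.sum_congr rfl fun g _ => step1 g]
  have h := Finset.prod_univ_sum (fun _ : Fin m => (Finset.univ : Finset (Fin n)))
    (fun j k => F j k)
  rw [Fintype.piFinset_univ] at h
  rw [← h, ← Finset.mul_prod_erase Finset.univ (fun j => ∑ k, F j k) (Finset.mem_univ j0)]
  have h1 : ∑ k, F j0 k = f i := by simp [hF]
  have h2 : ∏ j ∈ Finset.univ.erase j0, (∑ k, F j k)
      = (∑ k, f k * y k) ^ (m - 1) := by
    have hc : ∀ j ∈ Finset.univ.erase j0, (∑ k, F j k) = ∑ k, f k * y k := by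
      intro j hj
      simp [hF, Finset.mem_erase.mp hj |>.1]
    rw [Finset.prod_congr rfl hc, Finset.prod_const, Finset.card_erase_of_mem (Finset.mem_univ j0),
      Finset.card_univ, Fintype.card_fin]
  rw [h1, h2]

/-- for the Vandermonde (Hankel) tensor
`H_V = u₁^{⊗m} + u₂^{⊗m}` with `u₁ = (1,α,…,α^{n−1})`, `u₂ = (1,β,…,β^{n−1})`,
`α = n/(n−1)`, `β = (1−n)/n`, and `m, n` even: (i) `u₁ ⟂ u₂`; (ii) `H_V x^m ≤ ‖u₁‖^m`
on the unit sphere with equality at `u₁/‖u₁‖`; (iii) `(‖u₁‖^m, u₁/‖u₁‖)` is a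
Z-eigenpair of `H_V`; (iv) every Z-eigenvalue `λ` of `H_V` satisfies `λ ≤ ‖u₁‖^m`,
i.e. `‖u₁‖^m` is the largest Z-eigenvalue of `H_V`. -/
theorem vandermonde_largest_Z_eigenvalue
    {m n : ℕ} (hm : 0 < m) (hm2 : 2 ≤ m) (hmeven : Even m)
    (hn2 : 2 ≤ n) (hneven : Even n)
    (a b : ℝ) (ha : a = (n : ℝ) / ((n : ℝ) - 1)) (hb : b = (1 - (n : ℝ)) / (n : ℝ))
    (u₁ u₂ : EuclideanSpace ℝ (Fin n))
    (hu₁ : ∀ i : Fin n, u₁ i = a ^ (i : ℕ))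
    (hu₂ : ∀ i : Fin n, u₂ i = b ^ (i : ℕ))
    (HV : (Fin m → Fin n) → ℝ)
    (hHV : ∀ g : Fin m → Fin n, HV g = (∏ j, u₁ (g j)) + ∏ j, u₂ (g j)) :
    (∑ i, u₁ i * u₂ i = 0) ∧
    (∀ x : EuclideanSpace ℝ (Fin n), ‖x‖ = 1 → tpow HV x ≤ ‖u₁‖ ^ m) ∧
    (tpow HV (‖u₁‖⁻¹ • u₁) = ‖u₁‖ ^ m) ∧
    (∀ i, tvec hm HV (‖u₁‖⁻¹ • u₁) i = ‖u₁‖ ^ m * (‖u₁‖⁻¹ • u₁) i) ∧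
    (∀ (lam : ℝ) (x : EuclideanSpace ℝ (Fin n)),
      (∀ i, tvec hm HV x i = lam * x i) → (∑ i, x i * x i = 1) →
        lam ≤ ‖u₁‖ ^ m) := by
  have hn0 : 0 < n := by omega
  have hnR : (2:ℝ) ≤ (n:ℝ) := by exact_mod_cast hn2
  have hnne : (n:ℝ) ≠ 0 := by linarith
  have hn1ne : (n:ℝ) - 1 ≠ 0 := by linarith
  -- (i) orthogonality
  have hab : a * b = -1 := by
    rw [ha, hb]; field_simp; ring
  have horth : ∑ i, u₁ i * u₂ i = 0 := by
    have h1 : ∑ i, u₁ i * u₂ i = ∑ i : Fin n, (-1:ℝ) ^ (i:ℕ) := by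
      apply Finset.sum_congr rfl
      intro i _
      rw [hu₁, hu₂, ← mul_pow, hab]
    rw [h1, Fin.sum_univ_eq_sum_range (fun i => (-1:ℝ) ^ i), neg_one_geom_sum, if_pos hneven]
  -- norms
  have hnormsq : ∀ x : EuclideanSpace ℝ (Fin n), ‖x‖ ^ 2 = ∑ i, x i * x i := by
    intro x
    rw [EuclideanSpace.norm_eq, Real.sq_sqrt (by positivity)]
    exact Finset.sum_congr rfl fun i _ => by rw [Real.norm_eq_abs, sq_abs, sq]
  set P := ∑ i, u₁ i * u₁ i with hP
  set Q := ∑ i, u₂ i * u₂ i with hQ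
  have hN1sq : ‖u₁‖ ^ 2 = P := hnormsq u₁
  have hu10 : u₁ ⟨0, hn0⟩ = 1 := by rw [hu₁]; simp
  have hu20 : u₂ ⟨0, hn0⟩ = 1 := by rw [hu₂]; simp
  have hPpos : 0 < P := by
    apply Finset.sum_pos' (fun i _ => mul_self_nonneg _)
    exact ⟨⟨0, hn0⟩, Finset.mem_univ _, by rw [hu10]; norm_num⟩
  have hQpos : 0 < Q := by
    apply Finset.sum_pos' (fun i _ => mul_self_nonneg _)
    exact ⟨⟨0, hn0⟩, Finset.mem_univ _, by rw [hu20]; norm_num⟩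
  have hN1pos : 0 < ‖u₁‖ := by
    rcases (norm_nonneg u₁).lt_or_eq with h | h
    · exact h
    · exfalso; rw [← h] at hN1sq; simp at hN1sq; rw [← hN1sq] at hPpos; linarith
  -- Q ≤ P
  have ha1 : 1 ≤ a := by
    rw [ha, le_div_iff₀ (by linarith)]; linarith
  have hb2 : b * b ≤ 1 := by
    rw [hb, div_mul_div_comm, div_le_one (by positivity)]
    nlinarith
  have hQleP : Q ≤ P := by
    apply Finset.sum_le_sum
    intro i _
    have h2 : u₂ i * u₂ i ≤ 1 := by
      rw [hu₂, ← mul_pow]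
      calc (b*b) ^ (i:ℕ) ≤ 1 ^ (i:ℕ) :=
            pow_le_pow_left₀ (mul_self_nonneg b) hb2 _
        _ = 1 := one_pow _
    have h1 : (1:ℝ) ≤ u₁ i * u₁ i := by
      rw [hu₁, ← mul_pow]
      calc (1:ℝ) = 1 ^ (i:ℕ) := (one_pow _).symm
        _ ≤ (a*a) ^ (i:ℕ) := pow_le_pow_left₀ zero_le_one (by nlinarith) _
    linarith
  -- core inequality
  have key : ∀ x : EuclideanSpace ℝ (Fin n), (∑ i, x i * x i) = 1 →
      (∑ k, u₁ k * x k) ^ m + (∑ k, u₂ k * x k) ^ m ≤ ‖u₁‖ ^ m := by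
    intro x hx
    set s := ∑ k, u₁ k * x k with hs
    set t := ∑ k, u₂ k * x k with ht
    set c := s / P with hcdef
    set d := t / Q with hddef
    have hcP : c * P = s := div_mul_cancel₀ s (ne_of_gt hPpos)
    have hdQ : d * Q = t := div_mul_cancel₀ t (ne_of_gt hQpos)
    have expand : ∑ i, (x i - c * u₁ i - d * u₂ i) ^ 2
        = (∑ i, x i * x i) - 2*c*s - 2*d*t + c^2*P + d^2*Q
          + 2*c*d*(∑ i, u₁ i * u₂ i) := by
      have hterm : ∀ i : Fin n, (x i - c * u₁ i - d * u₂ i) ^ 2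
          = x i * x i - 2*c*(u₁ i * x i) - 2*d*(u₂ i * x i)
            + c^2*(u₁ i * u₁ i) + d^2*(u₂ i * u₂ i) + 2*c*d*(u₁ i * u₂ i) :=
        fun i => by ring
      simp only [hterm, Finset.sum_add_distrib, Finset.sum_sub_distrib, ← Finset.mul_sum]
      rw [hs, ht, hP, hQ]
    have h0 : (0:ℝ) ≤ 1 - 2*c*s - 2*d*t + c^2*P + d^2*Q := by
      have := Finset.sum_nonneg (fun i (_ : i ∈ Finset.univ) =>
        sq_nonneg (x i - c * u₁ i - d * u₂ i))
      rw [expand, hx, horth] at this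
      linarith [this]
    have hc2 : c^2*P = c*s := by rw [sq, mul_assoc, hcP]
    have hd2 : d^2*Q = d*t := by rw [sq, mul_assoc, hdQ]
    have hbessel : c*s + d*t ≤ 1 := by linarith
    have hcs0 : 0 ≤ c * s := by
      rw [hcdef, div_mul_eq_mul_div]
      exact div_nonneg (mul_self_nonneg s) hPpos.le
    have hdt0 : 0 ≤ d * t := by
      rw [hddef, div_mul_eq_mul_div]
      exact div_nonneg (mul_self_nonneg t) hQpos.le
    have hst : s^2 + t^2 ≤ P := by
      have h1 : s^2 = (c*s) * P := by rw [mul_comm c s, mul_assoc, hcP]; ring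
      have h2 : t^2 = (d*t) * Q := by rw [mul_comm d t, mul_assoc, hdQ]; ring
      have h3 : (d*t) * Q ≤ (d*t) * P := mul_le_mul_of_nonneg_left hQleP hdt0
      have h4 : (c*s + d*t) * P ≤ 1 * P :=
        mul_le_mul_of_nonneg_right hbessel hPpos.le
      have h5 : (c*s) * P + (d*t) * P = (c*s + d*t) * P := by ring
      linarith
    obtain ⟨k, hk⟩ := hmeven
    have hk2 : m = 2 * k := by omega
    have hkne : k ≠ 0 := by omega
    calc s ^ m + t ^ m = (s^2)^k + (t^2)^k := by
          rw [hk2, pow_mul, pow_mul]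
      _ ≤ (s^2 + t^2)^k := pow_add_pow_le (sq_nonneg s) (sq_nonneg t) hkne
      _ ≤ P ^ k := pow_le_pow_left₀ (by positivity) hst k
      _ = ‖u₁‖ ^ m := by rw [← hN1sq, ← pow_mul, ← hk2]
  -- tpow formula
  have htpow : ∀ x : EuclideanSpace ℝ (Fin n),
      tpow HV x = (∑ k, u₁ k * x k) ^ m + (∑ k, u₂ k * x k) ^ m := by
    intro x
    unfold tpow
    simp only [hHV, add_mul]
    rw [Finset.sum_add_distrib]
    congr 1
    · rw [← prod_sum_aux]
      exact Finset.sum_congr rfl fun g _ => (Finset.prod_mul_distrib).symm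
    · rw [← prod_sum_aux]
      exact Finset.sum_congr rfl fun g _ => (Finset.prod_mul_distrib).symm
  -- tvec formula
  have htvec : ∀ (x : EuclideanSpace ℝ (Fin n)) (i : Fin n),
      tvec hm HV x i = u₁ i * (∑ k, u₁ k * x k) ^ (m-1)
        + u₂ i * (∑ k, u₂ k * x k) ^ (m-1) := by
    intro x i
    show (∑ g : Fin m → Fin n,
      if g ⟨0, hm⟩ = i then HV g * ∏ j ∈ Finset.univ.erase ⟨0, hm⟩, x (g j) else 0) = _
    rw [← ite_sum_aux ⟨0,hm⟩ i u₁ x, ← ite_sum_aux ⟨0,hm⟩ i u₂ x, ← Finset.sum_add_distrib]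
    apply Finset.sum_congr rfl
    intro g _
    rw [hHV]
    by_cases h : g ⟨0,hm⟩ = i
    · simp only [if_pos h]; ring
    · simp [h]
  -- inner products at u₁/‖u₁‖
  have hsmul : ∀ k : Fin n, (‖u₁‖⁻¹ • u₁) k = ‖u₁‖⁻¹ * u₁ k := fun k => rfl
  have hsval : ∑ k, u₁ k * (‖u₁‖⁻¹ • u₁) k = ‖u₁‖ := by
    simp only [hsmul]
    have : ∑ k, u₁ k * (‖u₁‖⁻¹ * u₁ k) = ‖u₁‖⁻¹ * P := by
      rw [Finset.mul_sum]; exact Finset.sum_congr rfl fun k _ => by ring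
    rw [this, ← hN1sq, sq]
    field_simp
  have htval : ∑ k, u₂ k * (‖u₁‖⁻¹ • u₁) k = 0 := by
    simp only [hsmul]
    have : ∑ k, u₂ k * (‖u₁‖⁻¹ * u₁ k) = ‖u₁‖⁻¹ * ∑ k, u₁ k * u₂ k := by
      rw [Finset.mul_sum]; exact Finset.sum_congr rfl fun k _ => by ring
    rw [this, horth, mul_zero]
  refine ⟨horth, ?_, ?_, ?_, ?_⟩
  · -- (ii)
    intro x hx
    rw [htpow]
    apply key
    rw [← hnormsq, hx, one_pow]
  · -- equality at u₁/‖u₁‖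
    rw [htpow, hsval, htval, zero_pow (by omega), add_zero]
  · -- (iii) eigenpair
    intro i
    rw [htvec, hsval, htval, zero_pow (by omega : m - 1 ≠ 0), mul_zero, add_zero, hsmul]
    have : ‖u₁‖ ^ m = ‖u₁‖ ^ (m-1) * ‖u₁‖ := by
      rw [← pow_succ]; congr 1; omega
    rw [this]
    field_simp
  · -- (iv)
    intro lam x hx hxs
    have hlam : lam = (∑ k, u₁ k * x k) ^ m + (∑ k, u₂ k * x k) ^ m := by
      have h1 : lam = ∑ i, tvec hm HV x i * x i := by
        simp only [hx]
        have : ∑ i, lam * x i * x i = lam * ∑ i, x i * x i := by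
          rw [Finset.mul_sum]; exact Finset.sum_congr rfl fun i _ => by ring
        rw [this, hxs, mul_one]
      rw [h1]
      have h2 : ∑ i, tvec hm HV x i * x i
          = (∑ k, u₁ k * x k) ^ (m-1) * (∑ i, u₁ i * x i)
            + (∑ k, u₂ k * x k) ^ (m-1) * (∑ i, u₂ i * x i) := by
        simp only [htvec, add_mul, Finset.sum_add_distrib]
        congr 1
        · rw [Finset.mul_sum]; exact Finset.sum_congr rfl fun i _ => by ring
        · rw [Finset.mul_sum]; exact Finset.sum_congr rfl fun i _ => by ring
      rw [h2, ← pow_succ, ← pow_succ]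
      congr 1 <;> · congr 1; omega
    rw [hlam]
    exact key x hxs
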